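/- Let N ≥ 2 and M ≥ 1, let V, W, q, V⁺ be as follows: V ∈ Matrix (Fin (N−1)) (Fin N) ℝ with ker V = span{1_N}, W ∈ Matrix (Fin N) (Fin (N−1)) ℝ with linearly independent columns, q ∈ ℝᴺ with qᵀW = 0 and qᵀ1_N = 1, and V⁺ := W(VW)⁻¹. Define the (2N+M)×(2(N−1)+M+2) block matrix T⁻¹ := [[I₂⊗V⁺, 0_{2N×M}, I₂⊗1_N], [0_{M×2(N−1)}, I_M, 0_{M×2}]] and the (2(N−1)+M+2)×(2N+M) block matrix T := [[I₂⊗V, 0_{2(N−1)×M}], [0_{M×2N}, I_M], [I₂⊗qᵀ, 0_{2×M}]]. Then T·T⁻¹ = I_{2(N−1)+M+2} and T⁻¹·T = I_{2N+M}. -/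

import Mathlib

open Matrix Kronecker

lemma keyvec {N : ℕ} (V : Matrix (Fin (N-1)) (Fin N) ℝ)
    (hV : LinearMap.ker V.mulVecLin = Submodule.span ℝ {(fun _ => 1 : Fin N → ℝ)})
    (q : Fin N → ℝ) (hq1 : q ⬝ᵥ (fun _ => 1) = 1)
    (y : Fin N → ℝ) (hVy : V *ᵥ y = 0) (hqy : q ⬝ᵥ y = 0) : y = 0 := by
  have hy : y ∈ LinearMap.ker V.mulVecLin := by
    simpa [Matrix.mulVecLin_apply] using hVy
  rw [hV, Submodule.mem_span_singleton] at hy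
  obtain ⟨c, hc⟩ := hy
  have : q ⬝ᵥ y = c := by
    rw [← hc, dotProduct_smul, hq1]; simp
  rw [hqy] at this
  rw [← hc, ← this]
  simp

/-- Equations (10)–(11) of the paper: the transformation matrices `T` and `T⁻¹` of the
observable canonical decomposition of the mixed clock ensemble are mutually inverse. -/
theorem stmt_7 (N M : ℕ) (hN : 2 ≤ N) (hM : 1 ≤ M)
    (V : Matrix (Fin (N-1)) (Fin N) ℝ)
    (hV : LinearMap.ker V.mulVecLin = Submodule.span ℝ {(fun _ => 1 : Fin N → ℝ)})
    (W : Matrix (Fin N) (Fin (N-1)) ℝ)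
    (hW : LinearIndependent ℝ (fun j : Fin (N-1) => fun i : Fin N => W i j))
    (q : Fin N → ℝ) (hqW : Matrix.vecMul q W = 0)
    (hq1 : q ⬝ᵥ (fun _ => 1) = 1)
    (Vplus : Matrix (Fin N) (Fin (N-1)) ℝ) (hVplus : Vplus = W * (V * W)⁻¹)
    (qrow : Matrix (Fin 1) (Fin N) ℝ) (hqrow : qrow = Matrix.of (fun _ j => q j))
    (onecol : Matrix (Fin N) (Fin 1) ℝ) (honecol : onecol = Matrix.of (fun _ _ => 1))
    (T : Matrix (((Fin 2 × Fin (N-1)) ⊕ Fin M) ⊕ (Fin 2 × Fin 1))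
        ((Fin 2 × Fin N) ⊕ Fin M) ℝ)
    (hT : T = Matrix.fromRows
      (Matrix.fromRows
        (Matrix.fromCols ((1 : Matrix (Fin 2) (Fin 2) ℝ) ⊗ₖ V) 0)
        (Matrix.fromCols 0 (1 : Matrix (Fin M) (Fin M) ℝ)))
      (Matrix.fromCols ((1 : Matrix (Fin 2) (Fin 2) ℝ) ⊗ₖ qrow) 0))
    (Tinv : Matrix ((Fin 2 × Fin N) ⊕ Fin M)
        (((Fin 2 × Fin (N-1)) ⊕ Fin M) ⊕ (Fin 2 × Fin 1)) ℝ)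
    (hTinv : Tinv = Matrix.fromRows
      (Matrix.fromCols
        (Matrix.fromCols ((1 : Matrix (Fin 2) (Fin 2) ℝ) ⊗ₖ Vplus) 0)
        ((1 : Matrix (Fin 2) (Fin 2) ℝ) ⊗ₖ onecol))
      (Matrix.fromCols (Matrix.fromCols 0 (1 : Matrix (Fin M) (Fin M) ℝ)) 0)) :
    T * Tinv = 1 ∧ Tinv * T = 1 := by
  -- V annihilates the all-ones vector
  have hV1 : V *ᵥ (fun _ => 1 : Fin N → ℝ) = 0 := by
    have : (fun _ => 1 : Fin N → ℝ) ∈ LinearMap.ker V.mulVecLin := by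
      rw [hV]; exact Submodule.mem_span_singleton_self _
    simpa [Matrix.mulVecLin_apply] using this
  -- W has injective mulVec
  have hWinj : ∀ x : Fin (N-1) → ℝ, W *ᵥ x = 0 → x = 0 := by
    intro x hx
    have hrep : W *ᵥ x = ∑ j : Fin (N-1), x j • (fun i => W i j) := by
      funext i
      simp [Matrix.mulVec, dotProduct, Finset.sum_apply, mul_comm]
    rw [hrep] at hx
    have := Fintype.linearIndependent_iff.mp hW x hx
    funext j; exact this j
  -- V * W is a unit
  have hVW : IsUnit (V * W) := by
    rw [← Matrix.mulVec_injective_iff_isUnit]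
    have h0 : ∀ x : Fin (N-1) → ℝ, (V * W) *ᵥ x = 0 → x = 0 := by
      intro x hx
      have h1 : V *ᵥ (W *ᵥ x) = 0 := by rwa [Matrix.mulVec_mulVec]
      have h2 : q ⬝ᵥ (W *ᵥ x) = 0 := by
        rw [dotProduct_mulVec, hqW]; simp
      exact hWinj x (keyvec V hV q hq1 _ h1 h2)
    intro x y hxy
    have := h0 (x - y) (by rw [Matrix.mulVec_sub, hxy, sub_self])
    exact sub_eq_zero.mp this
  have hdet : IsUnit (V * W).det := (Matrix.isUnit_iff_isUnit_det _).mp hVW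
  -- five scalar block identities
  have hA : V * Vplus = 1 := by
    rw [hVplus, ← Matrix.mul_assoc, Matrix.mul_nonsing_inv _ hdet]
  have hB : V * onecol = 0 := by
    ext i j
    have := congrFun hV1 i
    simpa [honecol, Matrix.mul_apply, Matrix.mulVec, dotProduct] using this
  have hqW' : qrow * W = 0 := by
    ext i j
    have := congrFun hqW j
    simpa [hqrow, Matrix.mul_apply, Matrix.vecMul, dotProduct] using this
  have hC : qrow * Vplus = 0 := by
    rw [hVplus, ← Matrix.mul_assoc, hqW', Matrix.zero_mul]
  have hD : qrow * onecol = 1 := by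
    ext i j
    have hij : i = j := Subsingleton.elim i j
    subst hij
    rw [Matrix.one_apply_eq]
    simpa [hqrow, honecol, Matrix.mul_apply, dotProduct] using hq1
  have hE : Vplus * V + onecol * qrow = 1 := by
    set D : Matrix (Fin N) (Fin N) ℝ := Vplus * V + onecol * qrow - 1 with hD'
    have hVD : V * D = 0 := by
      rw [hD', Matrix.mul_sub, Matrix.mul_add, ← Matrix.mul_assoc, ← Matrix.mul_assoc,
        hA, hB, Matrix.one_mul, Matrix.zero_mul, Matrix.mul_one, add_zero, sub_self]
    have hqD : qrow * D = 0 := by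
      rw [hD', Matrix.mul_sub, Matrix.mul_add, ← Matrix.mul_assoc, ← Matrix.mul_assoc,
        hC, hD, Matrix.zero_mul, Matrix.one_mul, zero_add, Matrix.mul_one, sub_self]
    have hDzero : D = 0 := by
      ext i j
      have hcol : (fun k => D k j) = 0 := by
        apply keyvec V hV q hq1
        · funext k
          have := congrFun (congrFun hVD k) j
          simpa [Matrix.mul_apply, Matrix.mulVec, dotProduct] using this
        · have := congrFun (congrFun hqD 0) j
          simpa [hqrow, Matrix.mul_apply, dotProduct] using this
      have := congrFun hcol i
      simpa using this
    have := sub_eq_zero.mp hDzero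
    simpa using this
  subst hT hTinv
  constructor
  · simp only [Matrix.fromRows_mul, Matrix.fromCols_mul_fromRows, Matrix.mul_fromCols]
    simp only [← Matrix.mul_kronecker_mul, Matrix.one_mul, hA, hB, hC, hD,
      Matrix.kronecker_zero, Matrix.one_kronecker_one, Matrix.mul_zero, Matrix.zero_mul,
      Matrix.mul_one, add_zero, zero_add]
    ext (⟨a,i⟩|i|⟨a,i⟩) (⟨b,j⟩|j|⟨b,j⟩) <;>
      simp [Matrix.one_apply, Prod.ext_iff] <;> tauto
  · simp only [Matrix.fromRows_mul, Matrix.fromCols_mul_fromRows, Matrix.mul_fromCols]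
    simp only [← Matrix.mul_kronecker_mul, Matrix.one_mul,
      Matrix.kronecker_zero, Matrix.one_kronecker_one, Matrix.mul_zero, Matrix.zero_mul,
      Matrix.mul_one, add_zero, zero_add]
    ext (⟨a,i⟩|i) (⟨b,j⟩|j) <;>
      simp [Matrix.one_apply, Prod.ext_iff, Matrix.add_apply, Matrix.kroneckerMap_apply]
    · have h := congrFun (congrFun hE i) j
      simp only [Matrix.add_apply, Matrix.one_apply] at h
      by_cases hab : a = b <;> simp [hab, h]
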